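/- The category of locally finite preorders and p-morphisms has finite limits: the one-element reflexive frame is a terminal object, the equalizer of f, g : W → V is the inclusion of the largest generated subframe of W on which f and g agree, and binary products exist. -/
import Mathlib

universe u

def IsPMorphism {W V : Type*} (rW : W → W → Prop) (rV : V → V → Prop) (f : W → V) : Prop :=
  (∀ ⦃w w'⦄, rW w w' → rV (f w) (f w')) ∧
  (∀ w v', rV (f w) v' → ∃ w', rW w w' ∧ f w' = v')

def IsLFPreorder {W : Type*} (r : W → W → Prop) : Prop :=
  Reflexive r ∧ Transitive r ∧ ∀ w : W, {w' | Relation.ReflTransGen r w w'}.Finite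

theorem rtg_iff {W : Type*} {r : W → W → Prop} (hr : Reflexive r) (ht : Transitive r)
    {a b : W} : Relation.ReflTransGen r a b ↔ r a b := by
  constructor
  · intro h
    induction h with
    | refl => exact hr a
    | tail _ h₂ ih => exact ht ih h₂
  · exact Relation.ReflTransGen.single

structure PreStruct (W₀ W₁ : Type u) : Type u where
  n : ℕ
  rel : Fin n → Fin n → Prop
  l0 : Fin n → W₀
  l1 : Fin n → W₁
  pt : Fin n

namespace PreStruct

variable {W₀ W₁ : Type u} {r₀ : W₀ → W₀ → Prop} {r₁ : W₁ → W₁ → Prop}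

def repoint (A : PreStruct W₀ W₁) (a : Fin A.n) : PreStruct W₀ W₁ :=
  { A with pt := a }

@[simp] theorem repoint_pt (A : PreStruct W₀ W₁) : A.repoint A.pt = A := rfl

def Valid (r₀ : W₀ → W₀ → Prop) (r₁ : W₁ → W₁ → Prop) (A : PreStruct W₀ W₁) : Prop :=
  Reflexive A.rel ∧ Transitive A.rel ∧ IsPMorphism A.rel r₀ A.l0 ∧ IsPMorphism A.rel r₁ A.l1

theorem Valid.repoint {A : PreStruct W₀ W₁} (h : Valid r₀ r₁ A) (a : Fin A.n) :
    Valid r₀ r₁ (A.repoint a) := h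

/-- point-free bisimulation conditions -/
def IsBR (A B : PreStruct W₀ W₁) (Z : Fin A.n → Fin B.n → Prop) : Prop :=
  (∀ a b, Z a b → A.l0 a = B.l0 b ∧ A.l1 a = B.l1 b) ∧
  (∀ a b, Z a b → ∀ a', A.rel a a' → ∃ b', B.rel b b' ∧ Z a' b') ∧
  (∀ a b, Z a b → ∀ b', B.rel b b' → ∃ a', A.rel a a' ∧ Z a' b')

def Bisim (A B : PreStruct W₀ W₁) : Prop :=
  ∃ Z : Fin A.n → Fin B.n → Prop, IsBR A B Z ∧ Z A.pt B.pt

theorem IsBR.id (A : PreStruct W₀ W₁) : IsBR A A (fun a b => a = b) := by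
  refine ⟨fun a b h => by subst h; exact ⟨rfl, rfl⟩, ?_, ?_⟩
  · rintro a b rfl a' h; exact ⟨a', h, rfl⟩
  · rintro a b rfl b' h; exact ⟨b', h, rfl⟩

theorem IsBR.flip {A B : PreStruct W₀ W₁} {Z} (h : IsBR A B Z) :
    IsBR B A (fun b a => Z a b) := by
  obtain ⟨hl, hf, hb⟩ := h
  exact ⟨fun b a hz => ⟨(hl a b hz).1.symm, (hl a b hz).2.symm⟩,
    fun b a hz b' hr => hb a b hz b' hr,
    fun b a hz a' hr => hf a b hz a' hr⟩

theorem IsBR.comp {A B C : PreStruct W₀ W₁} {Z₁ Z₂} (h₁ : IsBR A B Z₁) (h₂ : IsBR B C Z₂) :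
    IsBR A C (fun a c => ∃ b, Z₁ a b ∧ Z₂ b c) := by
  obtain ⟨hl₁, hf₁, hb₁⟩ := h₁
  obtain ⟨hl₂, hf₂, hb₂⟩ := h₂
  refine ⟨fun a c ⟨b, z1, z2⟩ => ?_, fun a c ⟨b, z1, z2⟩ a' hr => ?_,
    fun a c ⟨b, z1, z2⟩ c' hr => ?_⟩
  · exact ⟨(hl₁ a b z1).1.trans (hl₂ b c z2).1, (hl₁ a b z1).2.trans (hl₂ b c z2).2⟩
  · obtain ⟨b', hb', z1'⟩ := hf₁ a b z1 a' hr
    obtain ⟨c', hc', z2'⟩ := hf₂ b c z2 b' hb'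
    exact ⟨c', hc', b', z1', z2'⟩
  · obtain ⟨b', hb', z2'⟩ := hb₂ b c z2 c' hr
    obtain ⟨a', ha', z1'⟩ := hb₁ a b z1 b' hb'
    exact ⟨a', ha', b', z1', z2'⟩

theorem Bisim.refl (A : PreStruct W₀ W₁) : Bisim A A := ⟨_, IsBR.id A, rfl⟩

theorem Bisim.symm {A B : PreStruct W₀ W₁} (h : Bisim A B) : Bisim B A := by
  obtain ⟨Z, hZ, hpt⟩ := h
  exact ⟨_, hZ.flip, hpt⟩

theorem Bisim.trans {A B C : PreStruct W₀ W₁} (h₁ : Bisim A B) (h₂ : Bisim B C) : Bisim A C := by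
  obtain ⟨Z₁, hZ₁, hp₁⟩ := h₁
  obtain ⟨Z₂, hZ₂, hp₂⟩ := h₂
  exact ⟨_, hZ₁.comp hZ₂, B.pt, hp₁, hp₂⟩

theorem bisim_of_IsBR {A B : PreStruct W₀ W₁} {Z} (h : IsBR A B Z) {a b} (hab : Z a b) :
    Bisim (A.repoint a) (B.repoint b) := ⟨Z, h, hab⟩

end PreStruct

open PreStruct

def psSetoid (W₀ W₁ : Type u) (r₀ : W₀ → W₀ → Prop) (r₁ : W₁ → W₁ → Prop) :
    Setoid {A : PreStruct W₀ W₁ // Valid r₀ r₁ A} :=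
  ⟨fun A B => Bisim A.1 B.1, fun _ => Bisim.refl _, Bisim.symm, Bisim.trans⟩

def ProdFrame (W₀ W₁ : Type u) (r₀ : W₀ → W₀ → Prop) (r₁ : W₁ → W₁ → Prop) : Type u :=
  Quotient (psSetoid W₀ W₁ r₀ r₁)

variable {W₀ W₁ : Type u} {r₀ : W₀ → W₀ → Prop} {r₁ : W₁ → W₁ → Prop}

def mkX (A : {A : PreStruct W₀ W₁ // Valid r₀ r₁ A}) : ProdFrame W₀ W₁ r₀ r₁ :=
  Quotient.mk (psSetoid W₀ W₁ r₀ r₁) A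

theorem rx_aux {A B A' B' : PreStruct W₀ W₁} (hA : Bisim A A') (hB : Bisim B B')
    (h : ∃ a', A.rel A.pt a' ∧ Bisim (A.repoint a') B) :
    ∃ a', A'.rel A'.pt a' ∧ Bisim (A'.repoint a') B' := by
  obtain ⟨Z, hZ, hpt⟩ := hA
  obtain ⟨a', ha', hab⟩ := h
  obtain ⟨a₂', hrel, hz⟩ := hZ.2.1 A.pt A'.pt hpt a' ha'
  refine ⟨a₂', hrel, ?_⟩
  have h1 : Bisim (A.repoint a') (A'.repoint a₂') := bisim_of_IsBR hZ hz
  exact h1.symm.trans (hab.trans hB)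

def RX : ProdFrame W₀ W₁ r₀ r₁ → ProdFrame W₀ W₁ r₀ r₁ → Prop :=
  Quotient.lift₂ (fun A B => ∃ a', A.1.rel A.1.pt a' ∧ Bisim (A.1.repoint a') B.1)
    (by
      intro A B A' B' hA hB
      exact propext ⟨rx_aux hA hB, rx_aux hA.symm hB.symm⟩)

theorem rx_mk {A B : {A : PreStruct W₀ W₁ // Valid r₀ r₁ A}} :
    RX (mkX A) (mkX B) ↔ ∃ a', A.1.rel A.1.pt a' ∧ Bisim (A.1.repoint a') B.1 := Iff.rfl

theorem rx_succ {A : {A : PreStruct W₀ W₁ // Valid r₀ r₁ A}} {y : ProdFrame W₀ W₁ r₀ r₁}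
    (h : RX (mkX A) y) :
    ∃ a', A.1.rel A.1.pt a' ∧ y = mkX ⟨A.1.repoint a', A.2.repoint a'⟩ := by
  obtain ⟨B, rfl⟩ := Quotient.exists_rep y
  obtain ⟨a', ha', hb⟩ := h
  exact ⟨a', ha', (Quotient.sound hb.symm : _)⟩

theorem rx_step {A : {A : PreStruct W₀ W₁ // Valid r₀ r₁ A}} {a' : Fin A.1.n}
    (h : A.1.rel A.1.pt a') : RX (mkX A) (mkX ⟨A.1.repoint a', A.2.repoint a'⟩) :=
  ⟨a', h, Bisim.refl _⟩

def pX0 : ProdFrame W₀ W₁ r₀ r₁ → W₀ :=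
  Quotient.lift (fun A => A.1.l0 A.1.pt)
    (fun A B h => by obtain ⟨Z, hZ, hpt⟩ := h; exact (hZ.1 _ _ hpt).1)

def pX1 : ProdFrame W₀ W₁ r₀ r₁ → W₁ :=
  Quotient.lift (fun A => A.1.l1 A.1.pt)
    (fun A B h => by obtain ⟨Z, hZ, hpt⟩ := h; exact (hZ.1 _ _ hpt).2)

theorem part1 : ∀ (W : Type u) (r : W → W → Prop), IsLFPreorder r →
    ∃! u : W → PUnit.{u + 1}, IsPMorphism r (fun _ _ => True) u := by
  intro W r hr
  refine ⟨fun _ => PUnit.unit, ⟨fun _ _ _ => trivial, fun w v' _ => ⟨w, hr.1 w, rfl⟩⟩, ?_⟩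
  intro f _
  funext w
  rfl

theorem part2 : ∀ (W V : Type u) (rW : W → W → Prop) (rV : V → V → Prop),
      IsLFPreorder rW → IsLFPreorder rV →
      ∀ f g : W → V, IsPMorphism rW rV f → IsPMorphism rW rV g →
      letI E : Set W := {w | ∀ w', Relation.ReflTransGen rW w w' → f w' = g w'}
      letI rE : E → E → Prop := fun a b => rW a.1 b.1
      (∀ w ∈ E, ∀ w', rW w w' → w' ∈ E) ∧
      (∀ w ∈ E, f w = g w) ∧
      (∀ G : Set W, (∀ w ∈ G, ∀ w', rW w w' → w' ∈ G) → (∀ w ∈ G, f w = g w) →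
        G ⊆ E) ∧
      IsLFPreorder rE ∧ IsPMorphism rE rW (Subtype.val : E → W) ∧
      (∀ (A : Type u) (rA : A → A → Prop), IsLFPreorder rA →
        ∀ h : A → W, IsPMorphism rA rW h → f ∘ h = g ∘ h →
          ∃! h' : A → E, IsPMorphism rA rE h' ∧ Subtype.val ∘ h' = h) := by
  intro W V rW rV hW hV f g hf hg
  set E : Set W := {w | ∀ w', Relation.ReflTransGen rW w w' → f w' = g w'} with hE
  set rE : E → E → Prop := fun a b => rW a.1 b.1 with hrE
  have hgen : ∀ w ∈ E, ∀ w', rW w w' → w' ∈ E := by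
    intro w hw w' hr w'' hr'
    exact hw w'' (Relation.ReflTransGen.head hr hr')
  have hagree : ∀ w ∈ E, f w = g w := fun w hw => hw w Relation.ReflTransGen.refl
  refine ⟨hgen, hagree, ?_, ?_, ?_, ?_⟩
  · -- largest
    intro G hGgen hGag w hw w' hr
    have : w' ∈ G := by
      induction hr with
      | refl => exact hw
      | tail h₁ h₂ ih => exact hGgen _ ih _ h₂
    exact hGag _ this
  · -- IsLFPreorder rE
    refine ⟨fun a => hW.1 a.1, fun a b c h1 h2 => hW.2.1 h1 h2, ?_⟩
    intro e
    have hsub : {e' : E | Relation.ReflTransGen rE e e'} ⊆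
        Subtype.val ⁻¹' {w' | Relation.ReflTransGen rW e.1 w'} := by
      intro e' he'
      simp only [Set.mem_preimage, Set.mem_setOf_eq]
      induction he' with
      | refl => exact Relation.ReflTransGen.refl
      | tail _ h₂ ih => exact ih.tail h₂
    exact ((hW.2.2 e.1).preimage Subtype.val_injective.injOn).subset hsub
  · -- inclusion is p-morphism
    exact ⟨fun a b h => h, fun e w' hr => ⟨⟨w', hgen e.1 e.2 w' hr⟩, hr, rfl⟩⟩
  · -- universal property
    intro A rA hA h hh hcomm
    have hmem : ∀ a : A, h a ∈ E := by
      intro a w' hr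
      rw [rtg_iff hW.1 hW.2.1] at hr
      obtain ⟨a', _, rfl⟩ := hh.2 a w' hr
      exact congrFun hcomm a'
    refine ⟨fun a => ⟨h a, hmem a⟩, ⟨⟨fun a a' hr => hh.1 hr, ?_⟩, rfl⟩, ?_⟩
    · intro a e' hr
      obtain ⟨a', ha', he'⟩ := hh.2 a e'.1 hr
      exact ⟨a', ha', Subtype.ext he'⟩
    · intro h' ⟨_, hval⟩
      funext a
      exact Subtype.ext (congrFun hval a)

theorem part3 : ∀ (W₀ W₁ : Type u) (r₀ : W₀ → W₀ → Prop) (r₁ : W₁ → W₁ → Prop),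
      IsLFPreorder r₀ → IsLFPreorder r₁ →
      ∃ (X : Type u) (rX : X → X → Prop) (p₀ : X → W₀) (p₁ : X → W₁),
        IsLFPreorder rX ∧ IsPMorphism rX r₀ p₀ ∧ IsPMorphism rX r₁ p₁ ∧
        ∀ (U : Type u) (rU : U → U → Prop), IsLFPreorder rU →
          ∀ (f₀ : U → W₀) (f₁ : U → W₁),
            IsPMorphism rU r₀ f₀ → IsPMorphism rU r₁ f₁ →
            ∃! u : U → X, IsPMorphism rU rX u ∧ p₀ ∘ u = f₀ ∧ p₁ ∘ u = f₁ := by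
  intro W₀ W₁ r₀ r₁ h₀ h₁
  refine ⟨ProdFrame W₀ W₁ r₀ r₁, RX, pX0, pX1, ⟨?_, ?_, ?_⟩, ⟨?_, ?_⟩, ⟨?_, ?_⟩, ?_⟩
  · -- reflexive
    intro x
    induction x using Quotient.ind with | _ A =>
    exact ⟨A.1.pt, A.2.1 A.1.pt, Bisim.refl _⟩
  · -- transitive
    intro x y z hxy hyz
    induction x using Quotient.ind with | _ A =>
    induction y using Quotient.ind with | _ B =>
    induction z using Quotient.ind with | _ C =>
    obtain ⟨a', ha', Z, hZ, hroot⟩ := hxy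
    obtain ⟨b', hb', hBC⟩ := hyz
    obtain ⟨a'', ha'', hz⟩ := hZ.2.2 a' B.1.pt hroot b' hb'
    exact ⟨a'', A.2.2.1 ha' ha'', (bisim_of_IsBR hZ hz).trans hBC⟩
  · -- locally finite
    intro x
    induction x using Quotient.ind with | _ A =>
    have hsub : {y | Relation.ReflTransGen RX (mkX A) y} ⊆
        Set.range (fun a : Fin A.1.n => mkX ⟨A.1.repoint a, A.2.repoint a⟩) := by
      intro y hy
      simp only [Set.mem_setOf_eq] at hy
      induction hy with
      | refl => exact ⟨A.1.pt, rfl⟩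
      | tail _ h₂ ih =>
        obtain ⟨a, rfl⟩ := ih
        obtain ⟨a', _, rfl⟩ := rx_succ h₂
        exact ⟨a', rfl⟩
    exact (Set.finite_range _).subset hsub
  · -- p₀ stable
    intro x y hxy
    induction x using Quotient.ind with | _ A =>
    induction y using Quotient.ind with | _ B =>
    obtain ⟨a', ha', Z, hZ, hroot⟩ := hxy
    have h2 : A.1.l0 a' = B.1.l0 B.1.pt := (hZ.1 _ _ hroot).1
    show r₀ (A.1.l0 A.1.pt) (B.1.l0 B.1.pt)
    rw [← h2]
    exact A.2.2.2.1.1 ha'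
  · -- p₀ open
    intro x v' hv'
    induction x using Quotient.ind with | _ A =>
    obtain ⟨a', ha', hl⟩ := A.2.2.2.1.2 A.1.pt v' hv'
    exact ⟨mkX ⟨A.1.repoint a', A.2.repoint a'⟩, rx_step ha', hl⟩
  · -- p₁ stable
    intro x y hxy
    induction x using Quotient.ind with | _ A =>
    induction y using Quotient.ind with | _ B =>
    obtain ⟨a', ha', Z, hZ, hroot⟩ := hxy
    have h2 : A.1.l1 a' = B.1.l1 B.1.pt := (hZ.1 _ _ hroot).2
    show r₁ (A.1.l1 A.1.pt) (B.1.l1 B.1.pt)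
    rw [← h2]
    exact A.2.2.2.2.1 ha'
  · -- p₁ open
    intro x v' hv'
    induction x using Quotient.ind with | _ A =>
    obtain ⟨a', ha', hl⟩ := A.2.2.2.2.2 A.1.pt v' hv'
    exact ⟨mkX ⟨A.1.repoint a', A.2.repoint a'⟩, rx_step ha', hl⟩
  · -- universal property
    intro U rU hU f₀ f₁ hf₀ hf₁
    obtain ⟨hUr, hUt, hUf⟩ := hU
    have key : ∀ u : U, ∃ (n : ℕ) (e : Fin n → U) (p : Fin n),
        e p = u ∧ (∀ i, rU u (e i)) ∧ (∀ u', rU u u' → ∃ i, e i = u') := by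
      intro u
      have hfin := hUf u
      haveI := hfin.fintype
      let eq := (Fintype.equivFin {u' | Relation.ReflTransGen rU u u'}).symm
      refine ⟨_, fun i => (eq i).1, eq.symm ⟨u, Relation.ReflTransGen.refl⟩, by show ((eq (eq.symm ⟨u, Relation.ReflTransGen.refl⟩)) : U) = u; rw [Equiv.apply_symm_apply], ?_, ?_⟩
      · intro i
        exact (rtg_iff hUr hUt).1 (eq i).2
      · intro u' hu'
        exact ⟨eq.symm ⟨u', Relation.ReflTransGen.single hu'⟩, by show ((eq (eq.symm ⟨u', Relation.ReflTransGen.single hu'⟩)) : U) = u'; rw [Equiv.apply_symm_apply]⟩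
    choose n e p hep hup hsur using key
    let Au : U → PreStruct W₀ W₁ := fun u =>
      ⟨n u, fun i j => rU (e u i) (e u j), fun i => f₀ (e u i), fun i => f₁ (e u i), p u⟩
    have AuV : ∀ u, Valid r₀ r₁ (Au u) := by
      intro u
      refine ⟨fun i => hUr _, fun i j k h1 h2 => hUt h1 h2, ⟨fun i j h => hf₀.1 h, ?_⟩,
        ⟨fun i j h => hf₁.1 h, ?_⟩⟩
      · intro i v' hv'
        obtain ⟨u', hr, hfu⟩ := hf₀.2 (e u i) v' hv'
        obtain ⟨j, hej⟩ := hsur u u' (hUt (hup u i) hr)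
        exact ⟨j, by rw [show (Au u).rel i j ↔ rU (e u i) (e u j) from Iff.rfl, hej]; exact hr,
          by show f₀ (e u j) = v'; rw [hej]; exact hfu⟩
      · intro i v' hv'
        obtain ⟨u', hr, hfu⟩ := hf₁.2 (e u i) v' hv'
        obtain ⟨j, hej⟩ := hsur u u' (hUt (hup u i) hr)
        exact ⟨j, by rw [show (Au u).rel i j ↔ rU (e u i) (e u j) from Iff.rfl, hej]; exact hr,
          by show f₁ (e u j) = v'; rw [hej]; exact hfu⟩
    let AuS : U → {A : PreStruct W₀ W₁ // Valid r₀ r₁ A} := fun u => ⟨Au u, AuV u⟩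
    have L1 : ∀ u u', rU u u' → ∀ i : Fin (n u), e u i = u' →
        Bisim ((Au u).repoint i) (Au u') := by
      intro u u' huu' i hei
      refine ⟨fun a b => e u a = e u' b, ⟨?_, ?_, ?_⟩, ?_⟩
      · intro a b hz
        exact ⟨congrArg f₀ hz, congrArg f₁ hz⟩
      · intro a b hz a' hr
        have h1 : rU u' (e u a') := hUt (hz ▸ hup u' b) hr
        obtain ⟨j, hej⟩ := hsur u' (e u a') h1
        exact ⟨j, by show rU (e u' b) (e u' j); rw [hej, ← hz]; exact hr, hej.symm⟩
      · intro a b hz b' hr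
        have h1 : rU u (e u' b') := hUt huu' (hup u' b')
        obtain ⟨i', hei'⟩ := hsur u (e u' b') h1
        exact ⟨i', by show rU (e u a) (e u i'); rw [hei', hz]; exact hr, hei'⟩
      · show e u i = e u' (p u')
        rw [hei, hep u']
    let hmap : U → ProdFrame W₀ W₁ r₀ r₁ := fun u => mkX (AuS u)
    have hstab : ∀ ⦃u u'⦄, rU u u' → RX (hmap u) (hmap u') := by
      intro u u' h
      obtain ⟨i, hei⟩ := hsur u u' h
      refine ⟨i, ?_, L1 u u' h i hei⟩
      show rU (e u (p u)) (e u i)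
      rw [hep u, hei]; exact h
    have hopen : ∀ u y, RX (hmap u) y → ∃ u', rU u u' ∧ hmap u' = y := by
      intro u y hy
      obtain ⟨a', ha', rfl⟩ := rx_succ (A := AuS u) hy
      have hr : rU u (e u a') := by
        have h2 : rU (e u (p u)) (e u a') := ha'
        rwa [hep u] at h2
      refine ⟨e u a', hr, ?_⟩
      exact Quotient.sound ((L1 u (e u a') hr a' rfl).symm)
    refine ⟨hmap, ⟨⟨hstab, hopen⟩, ?_, ?_⟩, ?_⟩
    · funext u
      show f₀ (e u (p u)) = f₀ u
      rw [hep u]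
    · funext u
      show f₁ (e u (p u)) = f₁ u
      rw [hep u]
    · rintro h' ⟨⟨h's, h'o⟩, hp0, hp1⟩
      funext u
      obtain ⟨B, hB⟩ := Quotient.exists_rep (h' u)
      have main : Bisim B.1 (Au u) := by
        refine ⟨fun b j => h' (e u j) = mkX ⟨B.1.repoint b, B.2.repoint b⟩, ⟨?_, ?_, ?_⟩, ?_⟩
        · intro b j hz
          constructor
          · have h2 : pX0 (h' (e u j)) = f₀ (e u j) := congrFun hp0 (e u j)
            rw [hz] at h2
            exact h2
          · have h2 : pX1 (h' (e u j)) = f₁ (e u j) := congrFun hp1 (e u j)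
            rw [hz] at h2
            exact h2
        · intro b j hz b' hr
          have hrx : RX (h' (e u j)) (mkX ⟨B.1.repoint b', B.2.repoint b'⟩) := by
            rw [hz]
            exact rx_step (A := ⟨B.1.repoint b, B.2.repoint b⟩) hr
          obtain ⟨u'', hru, hh⟩ := h'o (e u j) _ hrx
          obtain ⟨j', hej'⟩ := hsur u u'' (hUt (hup u j) hru)
          refine ⟨j', ?_, ?_⟩
          · show rU (e u j) (e u j')
            rw [hej']; exact hru
          · show h' (e u j') = _
            rw [hej']; exact hh
        · intro b j hz j' hrel
          have hrx : RX (mkX ⟨B.1.repoint b, B.2.repoint b⟩) (h' (e u j')) := by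
            rw [← hz]; exact h's hrel
          obtain ⟨b'', hb'', heq⟩ := rx_succ hrx
          exact ⟨b'', hb'', heq⟩
        · show h' (e u (p u)) = mkX ⟨B.1.repoint B.1.pt, _⟩
          rw [hep u]
          exact hB.symm
      show h' u = mkX (AuS u)
      rw [← hB]
      exact Quotient.sound main

/-- The category of locally finite preorders and p-morphisms has
finite limits: the one-element reflexive frame is terminal, the equalizer of a
parallel pair `f, g : W → V` is the inclusion of the largest generated subframe of
`W` on which `f` and `g` agree, and binary products exist. -/
theorem statement19 :
    -- the one-element reflexive frame is terminal
    (∀ (W : Type u) (r : W → W → Prop), IsLFPreorder r →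
      ∃! u : W → PUnit.{u + 1},
        IsPMorphism r (fun _ _ => True) u) ∧
    -- equalizers: the largest generated subframe on which `f` and `g` agree
    (∀ (W V : Type u) (rW : W → W → Prop) (rV : V → V → Prop),
      IsLFPreorder rW → IsLFPreorder rV →
      ∀ f g : W → V, IsPMorphism rW rV f → IsPMorphism rW rV g →
      letI E : Set W := {w | ∀ w', Relation.ReflTransGen rW w w' → f w' = g w'}
      letI rE : E → E → Prop := fun a b => rW a.1 b.1
      -- `E` is a generated subframe on which `f` and `g` agree, and it is the
      -- largest such
      (∀ w ∈ E, ∀ w', rW w w' → w' ∈ E) ∧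
      (∀ w ∈ E, f w = g w) ∧
      (∀ G : Set W, (∀ w ∈ G, ∀ w', rW w w' → w' ∈ G) → (∀ w ∈ G, f w = g w) →
        G ⊆ E) ∧
      -- the inclusion of `E` is the equalizer of `f` and `g`
      IsLFPreorder rE ∧ IsPMorphism rE rW (Subtype.val : E → W) ∧
      (∀ (A : Type u) (rA : A → A → Prop), IsLFPreorder rA →
        ∀ h : A → W, IsPMorphism rA rW h → f ∘ h = g ∘ h →
          ∃! h' : A → E, IsPMorphism rA rE h' ∧ Subtype.val ∘ h' = h)) ∧
    -- binary products exist
    (∀ (W₀ W₁ : Type u) (r₀ : W₀ → W₀ → Prop) (r₁ : W₁ → W₁ → Prop),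
      IsLFPreorder r₀ → IsLFPreorder r₁ →
      ∃ (X : Type u) (rX : X → X → Prop) (p₀ : X → W₀) (p₁ : X → W₁),
        IsLFPreorder rX ∧ IsPMorphism rX r₀ p₀ ∧ IsPMorphism rX r₁ p₁ ∧
        ∀ (U : Type u) (rU : U → U → Prop), IsLFPreorder rU →
          ∀ (f₀ : U → W₀) (f₁ : U → W₁),
            IsPMorphism rU r₀ f₀ → IsPMorphism rU r₁ f₁ →
            ∃! u : U → X, IsPMorphism rU rX u ∧ p₀ ∘ u = f₀ ∧ p₁ ∘ u = f₁) := by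
  exact ⟨part1, part2, part3⟩
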